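/- Let R be a commutative ring and let a = 1 + Σ_{i≥1} a_i t^i and b = 1 + Σ_{i≥1} b_i t^i be formal power series in R[[t]] with constant term 1 such that a·b = 1. Then for every k ≥ 1, (-1)^k · a_k = Σ (-1)^{k-(n_1+⋯+n_k)} · ( (n_1+⋯+n_k)! / (n_1!⋯n_k!) ) · b_1^{n_1} ⋯ b_k^{n_k}, where the sum runs over all tuples (n_1,…,n_k) of nonnegative integers with n_1 + 2·n_2 + ⋯ + k·n_k = k. (This is the algebraic content of the critical-level identity of Proposition 4 (CritProp): for a short exact sequence 0 → 𝕍* → 𝔸 → 𝕎 → 0 with 𝔸 a trivial bundle one has c(𝕍*)·c(𝕎) = 1 and c_k(𝕍) = (-1)^k c_k(𝕍*), so the k-th Chern class of 𝕍 is the displayed polynomial in the Chern classes of its critical-level partner 𝕎.) -/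

import Mathlib

open Finset

/-- If `a` and `b` are formal power series with constant term `1` and `a·b = 1`, then for
every `k ≥ 1` one has
`(-1)^k a_k = Σ (-1)^{k-(n_1+⋯+n_k)} ((n_1+⋯+n_k)!/(n_1!⋯n_k!)) b_1^{n_1} ⋯ b_k^{n_k}`,
summed over tuples `(n_1,…,n_k)` of nonnegative integers with `n_1 + 2n_2 + ⋯ + k·n_k = k`.
This is the algebraic content of the critical-level identity (Proposition CritProp). -/
theorem coeff_of_inverse_eq_multinomial_sum {R : Type*} [CommRing R]
    (a b : PowerSeries R)
    (ha : PowerSeries.constantCoeff a = 1) (hb : PowerSeries.constantCoeff b = 1)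
    (hab : a * b = 1) (k : ℕ) (hk : 1 ≤ k) :
    (-1 : R) ^ k * PowerSeries.coeff k a =
      ∑ f ∈ (Fintype.piFinset fun _ : Fin k => Finset.range (k + 1)).filter
          (fun f : Fin k → ℕ => ∑ i : Fin k, (i.val + 1) * f i = k),
        (-1 : R) ^ (k - ∑ i : Fin k, f i) * (Nat.multinomial Finset.univ f : R) *
          ∏ i : Fin k, (PowerSeries.coeff (i.val + 1) b) ^ (f i) := by
  classical
  open PowerSeries in
  set c : PowerSeries R := 1 - b with hc
  have hc0 : PowerSeries.constantCoeff c = 0 := by simp [hc, hb]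
  have hXc : (PowerSeries.X : PowerSeries R) ∣ c := PowerSeries.X_dvd_iff.mpr hc0
  -- geometric series identity
  have hgeom : a = (∑ n ∈ range (k + 1), c ^ n) + a * c ^ (k + 1) := by
    have h1 : b * (∑ n ∈ range (k + 1), c ^ n) = 1 - c ^ (k + 1) := by
      have h2 := mul_geom_sum c (k + 1)
      have hb' : b = -(c - 1) := by rw [hc]; ring
      rw [hb', neg_mul, h2, neg_sub]
    have : (∑ n ∈ range (k + 1), c ^ n) = a * (1 - c ^ (k + 1)) := by
      calc (∑ n ∈ range (k + 1), c ^ n) = (a * b) * (∑ n ∈ range (k + 1), c ^ n) := by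
            rw [hab, one_mul]
        _ = a * (1 - c ^ (k + 1)) := by rw [mul_assoc, h1]
    rw [this]; ring
  have hcoeffa : PowerSeries.coeff k a = ∑ n ∈ range (k + 1), PowerSeries.coeff k (c ^ n) := by
    have h0 : PowerSeries.coeff k (a * c ^ (k + 1)) = 0 := by
      have hdvd : (PowerSeries.X : PowerSeries R) ^ (k + 1) ∣ a * c ^ (k + 1) :=
        Dvd.dvd.mul_left (pow_dvd_pow_of_dvd hXc _) a
      exact PowerSeries.X_pow_dvd_iff.mp hdvd k (Nat.lt_succ_self k)
    conv_lhs => rw [hgeom]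
    rw [map_add, map_sum, h0, add_zero]
  -- the polynomial truncation of c
  set p : PowerSeries R :=
    ∑ i : Fin k, PowerSeries.C (PowerSeries.coeff (i.1 + 1) c) * PowerSeries.X ^ (i.1 + 1)
    with hp
  have hcoeffp : ∀ m, m ≤ k → PowerSeries.coeff m p = PowerSeries.coeff m c := by
    intro m hm
    rcases Nat.eq_zero_or_pos m with hm0 | hm0
    · subst hm0
      rw [hp, map_sum]
      rw [Finset.sum_eq_zero, PowerSeries.coeff_zero_eq_constantCoeff, hc0]
      intro i _
      rw [PowerSeries.coeff_C_mul, PowerSeries.coeff_X_pow, if_neg (by omega), mul_zero]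
    · obtain ⟨j, rfl⟩ : ∃ j, m = j + 1 := ⟨m - 1, by omega⟩
      have hj : j < k := by omega
      rw [hp, map_sum, Finset.sum_eq_single (⟨j, hj⟩ : Fin k)]
      · rw [PowerSeries.coeff_C_mul, PowerSeries.coeff_X_pow, if_pos rfl, mul_one]
      · intro i _ hne
        rw [PowerSeries.coeff_C_mul, PowerSeries.coeff_X_pow, if_neg, mul_zero]
        intro h
        exact hne (Fin.ext (by simp at h ⊢; omega))
      · intro h; exact absurd (Finset.mem_univ _) h
  have hcp : (PowerSeries.X : PowerSeries R) ^ (k + 1) ∣ c - p := by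
    rw [PowerSeries.X_pow_dvd_iff]
    intro m hm
    rw [map_sub, hcoeffp m (by omega), sub_self]
  have hcpn : ∀ n, PowerSeries.coeff k (c ^ n) = PowerSeries.coeff k (p ^ n) := by
    intro n
    have hdvd : (PowerSeries.X : PowerSeries R) ^ (k + 1) ∣ c ^ n - p ^ n :=
      dvd_trans hcp (sub_dvd_pow_sub_pow c p n)
    have h0 := PowerSeries.X_pow_dvd_iff.mp hdvd k (Nat.lt_succ_self k)
    rw [map_sub, sub_eq_zero] at h0
    exact h0
  -- multinomial expansion of p ^ n
  have hpn : ∀ n, PowerSeries.coeff k (p ^ n) =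
      ∑ f ∈ (piAntidiag (univ : Finset (Fin k)) n).filter
          (fun f : Fin k → ℕ => ∑ i : Fin k, (i.1 + 1) * f i = k),
        (Nat.multinomial univ f : R) * ∏ i : Fin k, (PowerSeries.coeff (i.1 + 1) c) ^ (f i) := by
    intro n
    rw [hp, Finset.sum_pow_eq_sum_piAntidiag, map_sum, Finset.sum_filter]
    refine Finset.sum_congr rfl fun f _ => ?_
    have key : ∏ i : Fin k,
        (PowerSeries.C (PowerSeries.coeff (i.1 + 1) c) * PowerSeries.X ^ (i.1 + 1)) ^ f i
        = PowerSeries.C (∏ i : Fin k, (PowerSeries.coeff (i.1 + 1) c) ^ f i) *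
          PowerSeries.X ^ (∑ i : Fin k, (i.1 + 1) * f i) := by
      simp_rw [mul_pow, ← pow_mul, ← map_pow]
      rw [Finset.prod_mul_distrib, ← map_prod, Finset.prod_pow_eq_pow_sum]
    rw [key, ← mul_assoc, ← map_natCast PowerSeries.C (Nat.multinomial univ f), ← map_mul,
      PowerSeries.coeff_C_mul, PowerSeries.coeff_X_pow]
    by_cases hs : ∑ i : Fin k, (i.1 + 1) * f i = k
    · rw [if_pos hs, if_pos hs.symm, mul_one]
    · rw [if_neg hs, if_neg (fun h => hs h.symm), mul_zero]
  -- combine via fiberwise summation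
  set T : Finset (Fin k → ℕ) :=
    (Fintype.piFinset fun _ : Fin k => Finset.range (k + 1)).filter
      (fun f : Fin k → ℕ => ∑ i : Fin k, (i.1 + 1) * f i = k) with hT
  have hbound : ∀ f ∈ T, (∑ i : Fin k, f i) ≤ k := by
    intro f hf
    rw [hT, Finset.mem_filter] at hf
    calc (∑ i : Fin k, f i) ≤ ∑ i : Fin k, (i.1 + 1) * f i :=
          Finset.sum_le_sum fun i _ => Nat.le_mul_of_pos_left (f i) (Nat.succ_pos i.1)
      _ = k := hf.2
  have hfiber : ∀ n ∈ range (k + 1),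
      T.filter (fun f => (∑ i : Fin k, f i) = n) =
      (piAntidiag (univ : Finset (Fin k)) n).filter
        (fun f : Fin k → ℕ => ∑ i : Fin k, (i.1 + 1) * f i = k) := by
    intro n _
    ext f
    simp only [hT, Finset.mem_filter, Fintype.mem_piFinset, Finset.mem_range, mem_piAntidiag,
      Finset.mem_univ, implies_true, and_true]
    constructor
    · rintro ⟨⟨-, hsum⟩, hn⟩
      exact ⟨hn, hsum⟩
    · rintro ⟨hn, hsum⟩
      refine ⟨⟨fun i => ?_, hsum⟩, hn⟩
      have h1 : f i ≤ (i.1 + 1) * f i := Nat.le_mul_of_pos_left (f i) (Nat.succ_pos i.1)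
      have h2 : (i.1 + 1) * f i ≤ ∑ j : Fin k, (j.1 + 1) * f j :=
        Finset.single_le_sum (f := fun j : Fin k => (j.1 + 1) * f j)
          (fun j _ => Nat.zero_le _) (Finset.mem_univ i)
      omega
  have hmain : PowerSeries.coeff k a =
      ∑ f ∈ T, (Nat.multinomial univ f : R) *
        ∏ i : Fin k, (PowerSeries.coeff (i.1 + 1) c) ^ (f i) := by
    rw [hcoeffa]
    rw [← Finset.sum_fiberwise_of_maps_to (g := fun f : Fin k → ℕ => ∑ i : Fin k, f i)
      (t := range (k + 1)) (fun f hf => Finset.mem_range.mpr (Nat.lt_succ_of_le (hbound f hf)))]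
    refine Finset.sum_congr rfl fun n hn => ?_
    rw [hcpn, hpn, ← hfiber n hn]
  -- replace c-coefficients by b-coefficients with signs
  have hcb : ∀ i : Fin k, PowerSeries.coeff (i.1 + 1) c = -(PowerSeries.coeff (i.1 + 1) b) := by
    intro i
    rw [hc, map_sub, PowerSeries.coeff_one, if_neg (by omega), zero_sub]
  rw [hmain, Finset.mul_sum]
  refine Finset.sum_congr rfl fun f hf => ?_
  have hprod : ∏ i : Fin k, (PowerSeries.coeff (i.1 + 1) c) ^ f i
      = (-1 : R) ^ (∑ i : Fin k, f i) * ∏ i : Fin k, (PowerSeries.coeff (i.1 + 1) b) ^ f i := by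
    rw [← Finset.prod_pow_eq_pow_sum, ← Finset.prod_mul_distrib]
    refine Finset.prod_congr rfl fun i _ => ?_
    rw [hcb i, neg_pow]
  have hs := hbound f hf
  have hsign : (-1 : R) ^ k * (-1 : R) ^ (∑ i : Fin k, f i) = (-1 : R) ^ (k - ∑ i : Fin k, f i) := by
    have hksplit : k + (∑ i : Fin k, f i) = (k - ∑ i : Fin k, f i) + 2 * (∑ i : Fin k, f i) := by
      omega
    rw [← pow_add, hksplit, pow_add, pow_mul, neg_one_sq, one_pow, mul_one]
  rw [hprod, ← hsign]
  ring
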